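/- Suppose 0 ≤ β_a < β_u < δ < β, all of α_i, α_a, ν_a, δ_a, δ_u, η are positive, m ≥ 1, and α_a/δ_a < (β−β_a)/(δ−β_a). Then the SAUIS system with ε = 0 has an endemic equilibrium in Ω; that is, there exist a > 0, u > 0, i > 0 with a + u + i < 1 at which all three right-hand sides of the system vanish. -/

import Mathlib

open Set Filter Topology

structure SPar : Type where
  β : ℝ
  βa : ℝ
  βu : ℝ
  αi : ℝ
  αa : ℝ
  νa : ℝ
  δ : ℝ
  δa : ℝ
  δu : ℝ
  η : ℝ
  m : ℝ

namespace SPar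

variable (p : SPar)

structure Good : Prop where
  hβa0 : 0 ≤ p.βa
  hβaβu : p.βa < p.βu
  hβuδ : p.βu < p.δ
  hδβ : p.δ < p.β
  hαi : 0 < p.αi
  hαa : 0 < p.αa
  hνa : 0 < p.νa
  hδa : 0 < p.δa
  hδu : 0 < p.δu
  hη : 0 < p.η
  hm : 1 ≤ p.m
  hratio : p.αa / p.δa < (p.β - p.βa) / (p.δ - p.βa)

noncomputable def sig (i : ℝ) : ℝ := 1 / (1 + (i / p.η) ^ p.m)
noncomputable def Dd (s i : ℝ) : ℝ := p.δa * p.sig i + p.βa * i - p.αa * s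
noncomputable def aF (s i : ℝ) : ℝ := p.αi * s * i / p.Dd s i
noncomputable def kF (s i : ℝ) : ℝ := p.sig i * (p.δa + p.νa * s) / (p.βu * i + p.δu)
noncomputable def CF (s i : ℝ) : ℝ := s + p.aF s i * (1 + p.kF s i) + i - 1
noncomputable def sHi (i : ℝ) : ℝ := (p.δa * p.sig i + p.βa * i) / (p.αa + p.αi * i)
open Classical in
noncomputable def SF (i : ℝ) : ℝ :=
  if h : ∃ x, x ∈ Set.Ioo 0 (p.sHi i) ∧ p.CF x i = 0 then h.choose else 0
noncomputable def aS (i : ℝ) : ℝ := p.aF (p.SF i) i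
noncomputable def kS (i : ℝ) : ℝ := p.kF (p.SF i) i
noncomputable def hF (i : ℝ) : ℝ := p.β * p.SF i + p.βa * p.aS i + p.βu * (p.kS i * p.aS i) - p.δ

noncomputable def sc : ℝ := (p.δ - p.βa) / (p.β - p.βa)
noncomputable def s2 : ℝ := (p.sc + min (p.δa / p.αa) 1) / 2
noncomputable def k1 : ℝ := p.δa / (2 * (p.βu + p.δu))
noncomputable def k2 : ℝ := (p.δa + p.νa) / p.δu
noncomputable def W1 : ℝ := (p.βa + p.βu * p.k1) / (1 + p.k1)
noncomputable def D3 : ℝ := (p.δa - p.αa * p.s2) / 2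
noncomputable def MM : ℝ := (p.β - p.W1) * p.s2 - (p.δ - p.W1)
noncomputable def i1 : ℝ := 1 - p.δ / (2 * p.β)
noncomputable def i0 : ℝ :=
  min p.η (min 1 (min (p.i1 / 2) (min (p.η * p.D3 / p.δa) (min ((1 - p.s2) / 2)
    (min (p.D3 * (1 - p.s2) / (5 * p.αi * (1 + p.k2))) (p.MM / (2 * (p.W1 + 1))))))))

variable {p}

section Basic

variable (hp : p.Good)
include hp

lemma hβ0 : 0 < p.β := lt_trans (lt_of_le_of_lt hp.hβa0 (hp.hβaβu.trans hp.hβuδ)) hp.hδβ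
lemma hδ0 : 0 < p.δ := lt_of_le_of_lt hp.hβa0 (hp.hβaβu.trans hp.hβuδ)
lemma hβu0 : 0 < p.βu := lt_of_le_of_lt hp.hβa0 hp.hβaβu

lemma tau_pos {i : ℝ} (hi : 0 < i) : 0 < (i / p.η) ^ p.m :=
  Real.rpow_pos_of_pos (div_pos hi hp.hη) _

lemma one_add_tau_pos {i : ℝ} (hi : 0 < i) : 0 < 1 + (i / p.η) ^ p.m := by
  linarith [tau_pos hp hi]

lemma sig_pos {i : ℝ} (hi : 0 < i) : 0 < p.sig i :=
  div_pos one_pos (one_add_tau_pos hp hi)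

lemma sig_le_one {i : ℝ} (hi : 0 < i) : p.sig i ≤ 1 := by
  rw [sig, div_le_one (one_add_tau_pos hp hi)]
  linarith [tau_pos hp hi]

lemma tau_le {i : ℝ} (hi : 0 < i) (hle : i ≤ p.η) : (i / p.η) ^ p.m ≤ i / p.η := by
  have h1 : i / p.η ≤ 1 := div_le_one_of_le₀ hle hp.hη.le
  have := Real.rpow_le_rpow_of_exponent_ge (div_pos hi hp.hη) h1 hp.hm
  simpa using this

lemma sig_ge_half {i : ℝ} (hi : 0 < i) (hle : i ≤ p.η) : 1 / 2 ≤ p.sig i := by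
  have h1 : (i / p.η) ^ p.m ≤ 1 :=
    (tau_le hp hi hle).trans (div_le_one_of_le₀ hle hp.hη.le)
  rw [sig]
  have h2 := one_add_tau_pos hp hi
  rw [div_le_div_iff₀ (by norm_num) h2]
  linarith

lemma sig_ge {i : ℝ} (hi : 0 < i) (hle : i ≤ p.η) : 1 - i / p.η ≤ p.sig i := by
  have h1 := tau_le hp hi hle
  have h2 := one_add_tau_pos hp hi
  have h3 := tau_pos hp hi
  rw [sig, le_div_iff₀ h2]
  nlinarith [sq_nonneg ((i / p.η) ^ p.m)]

lemma sig_contAt {i : ℝ} (hi : 0 < i) : ContinuousAt p.sig i := by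
  have h1 : ContinuousAt (fun j : ℝ => (j / p.η) ^ p.m) i := by
    have hb : ContinuousAt (fun j : ℝ => j / p.η) i := continuousAt_id.div_const _
    exact hb.rpow_const (Or.inl (ne_of_gt (div_pos hi hp.hη)))
  have h2 : ContinuousAt (fun j : ℝ => 1 + (j / p.η) ^ p.m) i := continuousAt_const.add h1
  exact continuousAt_const.div h2 (ne_of_gt (one_add_tau_pos hp hi))

lemma sHi_pos {i : ℝ} (hi : 0 < i) : 0 < p.sHi i := by
  apply div_pos
  · nlinarith [sig_pos hp hi, hp.hδa, hp.hβa0]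
  · nlinarith [hp.hαa, hp.hαi]

lemma Dd_sHi {i : ℝ} (hi : 0 < i) : p.Dd (p.sHi i) i = p.αi * i * p.sHi i := by
  have hd : 0 < p.αa + p.αi * i := by nlinarith [hp.hαa, hp.hαi]
  have e : (p.δa * p.sig i + p.βa * i) = (p.δa * p.sig i + p.βa * i) / (p.αa + p.αi * i) * (p.αa + p.αi * i) := (div_mul_cancel₀ _ hd.ne').symm
  rw [Dd, sHi]
  linear_combination e

lemma Dd_anti {x y i : ℝ} (hxy : x ≤ y) : p.Dd y i ≤ p.Dd x i := by
  have := hp.hαa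
  rw [Dd, Dd]
  nlinarith

lemma Dd_pos {x i : ℝ} (hi : 0 < i) (hx : x ≤ p.sHi i) : 0 < p.Dd x i := by
  have h1 : 0 < p.Dd (p.sHi i) i := by
    rw [Dd_sHi hp hi]
    exact mul_pos (mul_pos hp.hαi hi) (sHi_pos hp hi)
  exact lt_of_lt_of_le h1 (Dd_anti hp hx)


lemma kF_nonneg {x i : ℝ} (hi : 0 < i) (hx : 0 ≤ x) : 0 ≤ p.kF x i := by
  have h1 := sig_pos hp hi
  have h2 : 0 < p.βu * i + p.δu := by nlinarith [hβu0 hp, hp.hδu]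
  have h3 : 0 ≤ p.δa + p.νa * x := by nlinarith [hp.hδa, hp.hνa]
  exact div_nonneg (by nlinarith) h2.le

lemma kF_pos {x i : ℝ} (hi : 0 < i) (hx : 0 ≤ x) : 0 < p.kF x i := by
  have h1 := sig_pos hp hi
  have h2 : 0 < p.βu * i + p.δu := by nlinarith [hβu0 hp, hp.hδu]
  have h3 : 0 < p.δa + p.νa * x := by nlinarith [hp.hδa, hp.hνa]
  exact div_pos (by nlinarith) h2

lemma kF_mono {x y i : ℝ} (hi : 0 < i) (hx : 0 ≤ x) (hxy : x ≤ y) :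
    p.kF x i ≤ p.kF y i := by
  have h1 := sig_pos hp hi
  have h2 : 0 < p.βu * i + p.δu := by nlinarith [hβu0 hp, hp.hδu]
  rw [kF, kF, div_le_div_iff₀ h2 h2]
  nlinarith [mul_nonneg (mul_nonneg (sig_pos hp hi).le
    (mul_nonneg hp.hνa.le (sub_nonneg.2 hxy))) h2.le]

lemma aF_nonneg {x i : ℝ} (hi : 0 < i) (hx : 0 ≤ x) (hx2 : x ≤ p.sHi i) :
    0 ≤ p.aF x i := by
  exact div_nonneg (mul_nonneg (mul_nonneg hp.hαi.le hx) hi.le) (Dd_pos hp hi hx2).le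

lemma aF_pos {x i : ℝ} (hi : 0 < i) (hx : 0 < x) (hx2 : x ≤ p.sHi i) :
    0 < p.aF x i := by
  exact div_pos (mul_pos (mul_pos hp.hαi hx) hi) (Dd_pos hp hi hx2)

lemma aF_mono {x y i : ℝ} (hi : 0 < i) (hx : 0 ≤ x) (hxy : x ≤ y) (hy : y ≤ p.sHi i) :
    p.aF x i ≤ p.aF y i := by
  have hDx : 0 < p.Dd x i := Dd_pos hp hi (le_trans hxy hy)
  have hDy : 0 < p.Dd y i := Dd_pos hp hi hy
  rw [aF, aF, div_le_div_iff₀ hDx hDy]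
  have h1 : p.Dd y i ≤ p.Dd x i := Dd_anti hp hxy
  have hNx : 0 ≤ p.αi * x * i := mul_nonneg (mul_nonneg hp.hαi.le hx) hi.le
  have hN : p.αi * x * i ≤ p.αi * y * i := by
    nlinarith [mul_nonneg (mul_nonneg hp.hαi.le (sub_nonneg.2 hxy)) hi.le]
  have h2 : p.αi * x * i * p.Dd y i ≤ p.αi * x * i * p.Dd x i :=
    mul_le_mul_of_nonneg_left h1 hNx
  have h3 : p.αi * x * i * p.Dd x i ≤ p.αi * y * i * p.Dd x i :=
    mul_le_mul_of_nonneg_right hN hDx.le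
  linarith

lemma CF_strictMonoOn {i : ℝ} (hi : 0 < i) :
    StrictMonoOn (fun x => p.CF x i) (Set.Icc 0 (p.sHi i)) := by
  intro x hx y hy hxy
  simp only [CF]
  have h1 : p.aF x i * (1 + p.kF x i) ≤ p.aF y i * (1 + p.kF y i) := by
    apply mul_le_mul (aF_mono hp hi hx.1 hxy.le hy.2)
      (by linarith [kF_mono hp hi hx.1 hxy.le])
      (by linarith [kF_nonneg hp hi hx.1])
      (aF_nonneg hp hi (hx.1.trans hxy.le) hy.2)
  linarith

omit hp in
lemma CF_zero {i : ℝ} : p.CF 0 i = i - 1 := by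
  simp [CF, aF]

lemma aF_sHi {i : ℝ} (hi : 0 < i) : p.aF (p.sHi i) i = 1 := by
  have h1 := Dd_sHi hp hi
  have h2 : 0 < p.αi * i * p.sHi i := mul_pos (mul_pos hp.hαi hi) (sHi_pos hp hi)
  rw [aF, h1, div_eq_one_iff_eq (ne_of_gt h2)]
  ring

lemma CF_sHi_pos {i : ℝ} (hi : 0 < i) : 0 < p.CF (p.sHi i) i := by
  rw [CF, aF_sHi hp hi]
  have := kF_nonneg hp hi (sHi_pos hp hi).le
  have := sHi_pos hp hi
  nlinarith

lemma aF_contAt2 {q : ℝ × ℝ} (hi : 0 < q.2) (hD : 0 < p.Dd q.1 q.2) :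
    ContinuousAt (fun q : ℝ × ℝ => p.aF q.1 q.2) q := by
  have hsig2 : ContinuousAt (fun q : ℝ × ℝ => p.sig q.2) q :=
    (sig_contAt hp hi).comp continuousAt_snd
  have hDd2 : ContinuousAt (fun q : ℝ × ℝ => p.Dd q.1 q.2) q := by
    simp only [Dd]
    exact ((continuousAt_const.mul hsig2).add
      (continuousAt_const.mul continuousAt_snd)).sub (continuousAt_const.mul continuousAt_fst)
  simp only [aF]
  exact ((continuousAt_const.mul continuousAt_fst).mul continuousAt_snd).div hDd2
    (ne_of_gt hD)

lemma kF_contAt2 {q : ℝ × ℝ} (hi : 0 < q.2) :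
    ContinuousAt (fun q : ℝ × ℝ => p.kF q.1 q.2) q := by
  have hsig2 : ContinuousAt (fun q : ℝ × ℝ => p.sig q.2) q :=
    (sig_contAt hp hi).comp continuousAt_snd
  have hk2 : (0:ℝ) < p.βu * q.2 + p.δu := by nlinarith [hβu0 hp, hp.hδu]
  simp only [kF]
  exact (hsig2.mul (continuousAt_const.add (continuousAt_const.mul continuousAt_fst))).div
    ((continuousAt_const.mul continuousAt_snd).add continuousAt_const) (ne_of_gt hk2)

lemma CF_contAt2 {q : ℝ × ℝ} (hi : 0 < q.2) (hD : 0 < p.Dd q.1 q.2) :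
    ContinuousAt (fun q : ℝ × ℝ => p.CF q.1 q.2) q := by
  simp only [CF]
  exact ((continuousAt_fst.add ((aF_contAt2 hp hi hD).mul
    (continuousAt_const.add (kF_contAt2 hp hi)))).add
    continuousAt_snd).sub continuousAt_const

lemma CF_contOn_s {i : ℝ} (hi : 0 < i) :
    ContinuousOn (fun x => p.CF x i) (Set.Icc 0 (p.sHi i)) := by
  intro x hx
  have h : ContinuousAt (fun x => p.CF x i) x := by
    have h2 : ContinuousAt (fun x : ℝ => ((x, i) : ℝ × ℝ)) x :=
      continuousAt_id.prodMk continuousAt_const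
    exact ContinuousAt.comp (f := fun x : ℝ => ((x, i) : ℝ × ℝ))
      (CF_contAt2 hp (q := (x, i)) hi (Dd_pos hp hi hx.2)) h2
  exact h.continuousWithinAt

lemma exists_root {i : ℝ} (hi : 0 < i) (hi1 : i < 1) :
    ∃ x, x ∈ Set.Ioo 0 (p.sHi i) ∧ p.CF x i = 0 := by
  have h1 : (0:ℝ) ∈ Set.Ioo (p.CF 0 i) (p.CF (p.sHi i) i) := by
    constructor
    · rw [CF_zero]; linarith
    · exact CF_sHi_pos hp hi
  have h2 := intermediate_value_Ioo (sHi_pos hp hi).le (CF_contOn_s hp hi) h1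
  obtain ⟨x, hx, hfx⟩ := h2
  exact ⟨x, hx, hfx⟩

lemma SF_spec {i : ℝ} (hi : 0 < i) (hi1 : i < 1) :
    p.SF i ∈ Set.Ioo 0 (p.sHi i) ∧ p.CF (p.SF i) i = 0 := by
  have h := exists_root hp hi hi1
  unfold SF
  rw [dif_pos h]
  exact h.choose_spec

lemma root_eq_SF {i x : ℝ} (hi : 0 < i) (hi1 : i < 1)
    (hx : x ∈ Set.Icc 0 (p.sHi i)) (h0 : p.CF x i = 0) : x = p.SF i := by
  obtain ⟨hmem, heq⟩ := SF_spec hp hi hi1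
  exact (CF_strictMonoOn hp hi).injOn hx ⟨hmem.1.le, hmem.2.le⟩ (by rw [h0, heq])

lemma SF_pos {i : ℝ} (hi : 0 < i) (hi1 : i < 1) : 0 < p.SF i := (SF_spec hp hi hi1).1.1
lemma SF_lt_sHi {i : ℝ} (hi : 0 < i) (hi1 : i < 1) : p.SF i < p.sHi i := (SF_spec hp hi hi1).1.2

lemma balance {i : ℝ} (hi : 0 < i) (hi1 : i < 1) :
    p.aS i * (1 + p.kS i) = 1 - i - p.SF i := by
  have h := (SF_spec hp hi hi1).2
  rw [CF] at h
  rw [aS, kS]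
  linarith

lemma aS_pos {i : ℝ} (hi : 0 < i) (hi1 : i < 1) : 0 < p.aS i :=
  aF_pos hp hi (SF_pos hp hi hi1) (SF_lt_sHi hp hi hi1).le

lemma kS_pos {i : ℝ} (hi : 0 < i) (hi1 : i < 1) : 0 < p.kS i :=
  kF_pos hp hi (SF_pos hp hi hi1).le

lemma SF_lt_one_sub {i : ℝ} (hi : 0 < i) (hi1 : i < 1) : p.SF i < 1 - i := by
  have h := balance hp hi hi1
  nlinarith [aS_pos hp hi hi1, kS_pos hp hi hi1]


lemma sHi_contAt {i : ℝ} (hi : 0 < i) : ContinuousAt p.sHi i := by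
  have hd : (0:ℝ) < p.αa + p.αi * i := by nlinarith [hp.hαa, hp.hαi]
  unfold sHi
  exact ((continuousAt_const.mul (sig_contAt hp hi)).add
    (continuousAt_const.mul continuousAt_id)).div
    (continuousAt_const.add (continuousAt_const.mul continuousAt_id)) (ne_of_gt hd)

lemma SF_contAt {i : ℝ} (hi : 0 < i) (hi1 : i < 1) : ContinuousAt p.SF i := by
  rw [ContinuousAt, Metric.tendsto_nhds]
  intro ε hε
  have hx0 : 0 < p.SF i := SF_pos hp hi hi1
  have hxs : p.SF i < p.sHi i := SF_lt_sHi hp hi hi1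
  have hCFx : p.CF (p.SF i) i = 0 := (SF_spec hp hi hi1).2
  set x := p.SF i with hxdef
  set ε' : ℝ := min ε (min (x / 2) ((p.sHi i - x) / 2)) with hε'def
  have hε'pos : 0 < ε' := lt_min hε (lt_min (by linarith) (by linarith))
  have hε'le : ε' ≤ ε := min_le_left _ _
  have hε'x : ε' ≤ x / 2 := (min_le_right _ _).trans (min_le_left _ _)
  have hε's : ε' ≤ (p.sHi i - x) / 2 := (min_le_right _ _).trans (min_le_right _ _)
  have ha0 : 0 < x - ε' := by linarith
  have hbs : x + ε' < p.sHi i := by linarith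
  have hCa : p.CF (x - ε') i < 0 := by
    have h := (CF_strictMonoOn hp hi) ⟨ha0.le, by linarith⟩ ⟨hx0.le, hxs.le⟩ (by linarith)
    simpa [hCFx] using h
  have hCb : 0 < p.CF (x + ε') i := by
    have h := (CF_strictMonoOn hp hi) ⟨hx0.le, hxs.le⟩ ⟨by linarith, hbs.le⟩ (by linarith)
    simpa [hCFx] using h
  have hDa : 0 < p.Dd (x - ε') i := Dd_pos hp hi (by linarith)
  have hDb : 0 < p.Dd (x + ε') i := Dd_pos hp hi (by linarith)
  have hca : ContinuousAt (fun j => p.CF (x - ε') j) i :=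
    ContinuousAt.comp (f := fun j : ℝ => ((x - ε', j) : ℝ × ℝ))
      (CF_contAt2 hp (q := (x - ε', i)) hi hDa) (continuousAt_const.prodMk continuousAt_id)
  have hcb : ContinuousAt (fun j => p.CF (x + ε') j) i :=
    ContinuousAt.comp (f := fun j : ℝ => ((x + ε', j) : ℝ × ℝ))
      (CF_contAt2 hp (q := (x + ε', i)) hi hDb) (continuousAt_const.prodMk continuousAt_id)
  have E1 : ∀ᶠ j in 𝓝 i, p.CF (x - ε') j < 0 := hca.eventually (eventually_lt_nhds hCa)
  have E2 : ∀ᶠ j in 𝓝 i, 0 < p.CF (x + ε') j := hcb.eventually (eventually_gt_nhds hCb)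
  have E3 : ∀ᶠ j in 𝓝 i, x + ε' < p.sHi j :=
    (sHi_contAt hp hi).eventually (eventually_gt_nhds hbs)
  have E4 : ∀ᶠ j in 𝓝 i, j ∈ Set.Ioo (0:ℝ) 1 :=
    Filter.eventually_iff_exists_mem.mpr ⟨Set.Ioo 0 1, Ioo_mem_nhds hi hi1, fun j hj => hj⟩
  filter_upwards [E1, E2, E3, E4] with j h1 h2 h3 h4
  have hj0 : 0 < j := h4.1
  have hj1 : j < 1 := h4.2
  have hspec := SF_spec hp hj0 hj1
  have hmono := (CF_strictMonoOn hp hj0).monotoneOn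
  have hamem : x - ε' ∈ Set.Icc 0 (p.sHi j) := ⟨ha0.le, by linarith⟩
  have hbmem : x + ε' ∈ Set.Icc 0 (p.sHi j) := ⟨by linarith, h3.le⟩
  have hSmem : p.SF j ∈ Set.Icc 0 (p.sHi j) := ⟨hspec.1.1.le, hspec.1.2.le⟩
  have hgt : x - ε' < p.SF j := by
    by_contra hle
    push_neg at hle
    have h5 := hmono hSmem hamem hle
    simp only at h5
    rw [hspec.2] at h5
    linarith
  have hlt : p.SF j < x + ε' := by
    by_contra hle
    push_neg at hle
    have h5 := hmono hbmem hSmem hle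
    simp only at h5
    rw [hspec.2] at h5
    linarith
  rw [Real.dist_eq, abs_lt]
  constructor <;> linarith

lemma aS_contAt {i : ℝ} (hi : 0 < i) (hi1 : i < 1) : ContinuousAt p.aS i := by
  have hpair : ContinuousAt (fun j : ℝ => ((p.SF j, j) : ℝ × ℝ)) i :=
    (SF_contAt hp hi hi1).prodMk continuousAt_id
  have hD : 0 < p.Dd (p.SF i) i := Dd_pos hp hi (SF_lt_sHi hp hi hi1).le
  exact ContinuousAt.comp (f := fun j : ℝ => ((p.SF j, j) : ℝ × ℝ))
    (aF_contAt2 hp (q := (p.SF i, i)) hi hD) hpair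

lemma kS_contAt {i : ℝ} (hi : 0 < i) (hi1 : i < 1) : ContinuousAt p.kS i := by
  have hpair : ContinuousAt (fun j : ℝ => ((p.SF j, j) : ℝ × ℝ)) i :=
    (SF_contAt hp hi hi1).prodMk continuousAt_id
  exact ContinuousAt.comp (f := fun j : ℝ => ((p.SF j, j) : ℝ × ℝ))
    (kF_contAt2 hp (q := (p.SF i, i)) hi) hpair

lemma hF_contAt {i : ℝ} (hi : 0 < i) (hi1 : i < 1) : ContinuousAt p.hF i := by
  unfold hF
  exact ((continuousAt_const.mul (SF_contAt hp hi hi1)).add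
    (continuousAt_const.mul (aS_contAt hp hi hi1))).add
    (continuousAt_const.mul ((kS_contAt hp hi hi1).mul (aS_contAt hp hi hi1))) |>.sub
    continuousAt_const


lemma sc_pos : 0 < p.sc :=
  div_pos (by linarith [hp.hβaβu, hp.hβuδ]) (by linarith [hp.hβaβu, hp.hβuδ, hp.hδβ])

lemma sc_lt_one : p.sc < 1 := by
  rw [sc, div_lt_one (by linarith [hp.hβaβu, hp.hβuδ, hp.hδβ])]
  linarith [hp.hδβ]

lemma sc_lt_sstar : p.sc < p.δa / p.αa := by
  have h1 : 0 < p.δ - p.βa := by linarith [hp.hβaβu, hp.hβuδ]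
  have h2 : 0 < p.β - p.βa := by linarith [hp.hβaβu, hp.hβuδ, hp.hδβ]
  have hr := hp.hratio
  rw [div_lt_div_iff₀ hp.hδa h1] at hr
  rw [sc, div_lt_div_iff₀ h2 hp.hαa]
  nlinarith

lemma sc_lt_m : p.sc < min (p.δa / p.αa) 1 := lt_min (sc_lt_sstar hp) (sc_lt_one hp)

lemma sc_lt_s2 : p.sc < p.s2 := by
  have := sc_lt_m hp; rw [s2]; linarith

lemma s2_lt_m : p.s2 < min (p.δa / p.αa) 1 := by
  have := sc_lt_m hp; rw [s2]; linarith

lemma s2_pos : 0 < p.s2 := (sc_pos hp).trans (sc_lt_s2 hp)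

lemma s2_lt_one : p.s2 < 1 := lt_of_lt_of_le (s2_lt_m hp) (min_le_right _ _)

lemma alpha_s2_lt : p.αa * p.s2 < p.δa := by
  have h := lt_of_lt_of_le (s2_lt_m hp) (min_le_left _ _)
  rw [lt_div_iff₀ hp.hαa] at h
  linarith

lemma D3_pos : 0 < p.D3 := by
  rw [D3]; linarith [alpha_s2_lt hp]

lemma k1_pos : 0 < p.k1 :=
  div_pos hp.hδa (by nlinarith [hβu0 hp, hp.hδu])

lemma k2_pos : 0 < p.k2 := div_pos (by linarith [hp.hδa, hp.hνa]) hp.hδu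

lemma one_add_k1_pos : 0 < 1 + p.k1 := by linarith [k1_pos hp]

lemma βa_le_W1 : p.βa ≤ p.W1 := by
  rw [W1, le_div_iff₀ (one_add_k1_pos hp)]
  nlinarith [k1_pos hp, hp.hβaβu]

lemma W1_le_βu : p.W1 ≤ p.βu := by
  rw [W1, div_le_iff₀ (one_add_k1_pos hp)]
  nlinarith [k1_pos hp, hp.hβaβu]

lemma W1_nonneg : 0 ≤ p.W1 := hp.hβa0.trans (βa_le_W1 hp)

lemma W1_lt_β : p.W1 < p.β := lt_of_le_of_lt (W1_le_βu hp) (hp.hβuδ.trans hp.hδβ)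

lemma MM_pos : 0 < p.MM := by
  have hne : p.β - p.βa ≠ 0 := by
    have := hp.hβaβu; have := hp.hβuδ; have := hp.hδβ
    intro h; nlinarith [hp.hβaβu, hp.hβuδ, hp.hδβ]
  have h1 : (p.β - p.βa) * p.sc = p.δ - p.βa := by
    rw [sc]
    field_simp
  have h2 := sc_lt_s2 hp
  have h3 := s2_lt_one hp
  have h4 := βa_le_W1 hp
  have h5 : 0 < p.β - p.βa := by linarith [hp.hβaβu, hp.hβuδ, hp.hδβ]
  rw [MM]
  nlinarith [mul_nonneg (sub_nonneg.2 h4) (sub_nonneg.2 h3.le),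
    mul_pos h5 (sub_pos.2 h2)]

lemma i1_pos : 0 < p.i1 := by
  have h1 := hβ0 hp
  have h2 : p.δ / (2 * p.β) < 1 := by
    rw [div_lt_one (by linarith)]
    linarith [hp.hδβ]
  rw [i1]; linarith

lemma i1_lt_one : p.i1 < 1 := by
  have h1 := hβ0 hp
  have h2 : 0 < p.δ / (2 * p.β) := div_pos (hδ0 hp) (by linarith)
  rw [i1]; linarith

omit hp in
lemma i0_le_η : p.i0 ≤ p.η := min_le_left _ _
omit hp in
lemma i0_le_one : p.i0 ≤ 1 := (min_le_right _ _).trans (min_le_left _ _)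
omit hp in
lemma i0_le_c3 : p.i0 ≤ p.i1 / 2 :=
  ((min_le_right _ _).trans (min_le_right _ _)).trans (min_le_left _ _)
omit hp in
lemma i0_le_c4 : p.i0 ≤ p.η * p.D3 / p.δa :=
  (((min_le_right _ _).trans (min_le_right _ _)).trans (min_le_right _ _)).trans (min_le_left _ _)
omit hp in
lemma i0_le_c5 : p.i0 ≤ (1 - p.s2) / 2 :=
  ((((min_le_right _ _).trans (min_le_right _ _)).trans (min_le_right _ _)).trans
    (min_le_right _ _)).trans (min_le_left _ _)
omit hp in
lemma i0_le_c6 : p.i0 ≤ p.D3 * (1 - p.s2) / (5 * p.αi * (1 + p.k2)) :=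
  (((((min_le_right _ _).trans (min_le_right _ _)).trans (min_le_right _ _)).trans
    (min_le_right _ _)).trans (min_le_right _ _)).trans (min_le_left _ _)
omit hp in
lemma i0_le_c7 : p.i0 ≤ p.MM / (2 * (p.W1 + 1)) :=
  ((((min_le_right _ _).trans (min_le_right _ _)).trans (min_le_right _ _)).trans
    (min_le_right _ _)).trans ((min_le_right _ _).trans (min_le_right _ _))

lemma i0_pos : 0 < p.i0 := by
  have h1 := hp.hη
  have h2 := i1_pos hp
  have h3 : 0 < p.η * p.D3 / p.δa := div_pos (mul_pos hp.hη (D3_pos hp)) hp.hδa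
  have h4 : 0 < (1 - p.s2) / 2 := by linarith [s2_lt_one hp]
  have h5 : 0 < p.D3 * (1 - p.s2) / (5 * p.αi * (1 + p.k2)) :=
    div_pos (mul_pos (D3_pos hp) (by linarith [s2_lt_one hp]))
      (by nlinarith [hp.hαi, k2_pos hp])
  have h6 : 0 < p.MM / (2 * (p.W1 + 1)) :=
    div_pos (MM_pos hp) (by nlinarith [W1_nonneg hp])
  rw [i0]
  exact lt_min h1 (lt_min one_pos (lt_min (by linarith) (lt_min h3 (lt_min h4 (lt_min h5 h6)))))

lemma i0_lt_i1 : p.i0 < p.i1 :=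
  lt_of_le_of_lt (i0_le_c3 (p := p)) (by linarith [i1_pos hp])

lemma i0_lt_one : p.i0 < 1 := (i0_lt_i1 hp).trans (i1_lt_one hp)

lemma hF_i1_neg : p.hF p.i1 < 0 := by
  have hi0 := i1_pos hp
  have hi1 := i1_lt_one hp
  have ha := aS_pos hp hi0 hi1
  have hk := kS_pos hp hi0 hi1
  have hs := SF_pos hp hi0 hi1
  have hbal := balance hp hi0 hi1
  have hβfact : p.β * (1 - p.i1) = p.δ / 2 := by
    have hne : p.β ≠ 0 := (hβ0 hp).ne'
    rw [i1]
    field_simp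
    ring
  have h4 : p.β * p.SF p.i1 + p.β * p.aS p.i1 + p.β * (p.kS p.i1 * p.aS p.i1) = p.δ / 2 := by
    linear_combination p.β * hbal + hβfact
  have h1 : p.βa * p.aS p.i1 ≤ p.β * p.aS p.i1 := by
    nlinarith [hp.hβaβu, hp.hβuδ, hp.hδβ]
  have h2 : p.βu * (p.kS p.i1 * p.aS p.i1) ≤ p.β * (p.kS p.i1 * p.aS p.i1) := by
    nlinarith [mul_pos hk ha, hp.hβuδ, hp.hδβ]
  rw [hF]
  have hδpos := hδ0 hp
  linarith

lemma kS_le_k2_aux {i : ℝ} (hi : 0 < i) (hi1 : i < 1) (hsle : p.SF i ≤ 1) :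
    p.kS i ≤ p.k2 := by
  have hs0 := (SF_pos hp hi hi1).le
  have hσ1 := sig_le_one hp hi
  have hσ0 := (sig_pos hp hi).le
  have hd : (0:ℝ) < p.βu * i + p.δu := by nlinarith [hβu0 hp, hp.hδu]
  rw [kS, kF, k2]
  have hnum : p.sig i * (p.δa + p.νa * p.SF i) ≤ p.δa + p.νa := by
    have e1 : p.δa + p.νa * p.SF i ≤ p.δa + p.νa := by nlinarith [hp.hνa]
    have e2 : 0 ≤ p.δa + p.νa * p.SF i := by nlinarith [hp.hδa, hp.hνa]
    nlinarith [mul_le_mul hσ1 e1 e2 zero_le_one]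
  apply div_le_div₀ (by linarith [hp.hδa, hp.hνa]) hnum hp.hδu (by nlinarith [hβu0 hp])

lemma SF_i0_ge : p.s2 ≤ p.SF p.i0 := by
  by_contra hcon
  push_neg at hcon
  have hi0 := i0_pos hp
  have hi1 := i0_lt_one hp
  have hs0 := SF_pos hp hi0 hi1
  have hs2one := s2_lt_one hp
  have hsle1 : p.SF p.i0 ≤ 1 := by linarith
  have ha := aS_pos hp hi0 hi1
  have hk := kS_pos hp hi0 hi1
  have hkk2 := kS_le_k2_aux hp hi0 hi1 hsle1
  have hbal := balance hp hi0 hi1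
  -- lower bound on Dd
  have hσ := sig_ge hp hi0 (i0_le_η (p := p))
  have hc4 : p.δa * p.i0 / p.η ≤ p.D3 := by
    have h := i0_le_c4 (p := p)
    rw [le_div_iff₀ hp.hδa] at h
    rw [div_le_iff₀ hp.hη]
    nlinarith
  have hDge : p.D3 ≤ p.Dd (p.SF p.i0) p.i0 := by
    rw [Dd]
    have h1 : p.δa * (1 - p.i0 / p.η) ≤ p.δa * p.sig p.i0 :=
      mul_le_mul_of_nonneg_left hσ hp.hδa.le
    have h2 : p.δa * (1 - p.i0 / p.η) = p.δa - p.δa * p.i0 / p.η := by ring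
    have h3 : p.αa * p.SF p.i0 ≤ p.αa * p.s2 :=
      mul_le_mul_of_nonneg_left hcon.le hp.hαa.le
    have h4 : p.δa - p.αa * p.s2 = 2 * p.D3 := by rw [D3]; ring
    nlinarith [mul_nonneg hp.hβa0 hi0.le]
  have hDne : p.Dd (p.SF p.i0) p.i0 ≠ 0 :=
    (Dd_pos hp hi0 (SF_lt_sHi hp hi0 hi1).le).ne'
  have haD : p.aS p.i0 * p.Dd (p.SF p.i0) p.i0 = p.αi * p.SF p.i0 * p.i0 := by
    rw [aS, aF]
    exact div_mul_cancel₀ _ hDne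
  have h5 : p.aS p.i0 * p.D3 ≤ p.αi * p.i0 := by
    have h6 : p.aS p.i0 * p.D3 ≤ p.aS p.i0 * p.Dd (p.SF p.i0) p.i0 :=
      mul_le_mul_of_nonneg_left hDge ha.le
    have h7 : p.αi * p.SF p.i0 * p.i0 ≤ p.αi * p.i0 := by
      nlinarith [mul_nonneg (mul_nonneg hp.hαi.le hi0.le) (sub_nonneg.2 hsle1)]
    linarith
  have h8 : p.aS p.i0 * (1 + p.kS p.i0) * p.D3 ≤ p.αi * p.i0 * (1 + p.k2) := by
    have h9 : p.aS p.i0 * (1 + p.kS p.i0) * p.D3 = (p.aS p.i0 * p.D3) * (1 + p.kS p.i0) := by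
      ring
    have h10 : (p.aS p.i0 * p.D3) * (1 + p.kS p.i0) ≤ (p.αi * p.i0) * (1 + p.kS p.i0) :=
      mul_le_mul_of_nonneg_right h5 (by linarith)
    have h11 : (p.αi * p.i0) * (1 + p.kS p.i0) ≤ (p.αi * p.i0) * (1 + p.k2) :=
      mul_le_mul_of_nonneg_left (by linarith) (mul_nonneg hp.hαi.le hi0.le)
    linarith
  have hc6 : p.i0 * (5 * p.αi * (1 + p.k2)) ≤ p.D3 * (1 - p.s2) := by
    have h := i0_le_c6 (p := p)
    rwa [le_div_iff₀ (by nlinarith [hp.hαi, k2_pos hp])] at h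
  have hc5 := i0_le_c5 (p := p)
  have hD3 := D3_pos hp
  -- a(1+k) ≤ (1-s2)/5
  have h12 : p.aS p.i0 * (1 + p.kS p.i0) ≤ (1 - p.s2) / 5 := by
    rw [le_div_iff₀ (by norm_num : (0:ℝ) < 5)]
    nlinarith
  -- but a(1+k) = 1 - i0 - s ≥ (1-s2)/2
  nlinarith

lemma kS_i0_ge : p.k1 ≤ p.kS p.i0 := by
  have hi0 := i0_pos hp
  have hi1 := i0_lt_one hp
  have hs0 := (SF_pos hp hi0 hi1).le
  have hσ := sig_ge_half hp hi0 (i0_le_η (p := p))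
  have hσ0 := (sig_pos hp hi0).le
  have hd : (0:ℝ) < p.βu * p.i0 + p.δu := by nlinarith [hβu0 hp, hp.hδu]
  have hd2 : (0:ℝ) < 2 * (p.βu + p.δu) := by nlinarith [hβu0 hp, hp.hδu]
  rw [kS, kF, k1, div_le_div_iff₀ hd2 hd]
  have h1 : (1/2) * p.δa ≤ p.sig p.i0 * (p.δa + p.νa * p.SF p.i0) := by
    nlinarith [mul_nonneg hσ0 (mul_nonneg hp.hνa.le hs0),
      mul_le_mul_of_nonneg_right hσ hp.hδa.le]
  have h2 : p.δa * (p.βu * p.i0 + p.δu) ≤ p.δa * (p.βu + p.δu) := by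
    nlinarith [mul_nonneg (mul_nonneg hp.hδa.le (hβu0 hp).le)
      (sub_nonneg.2 (i0_le_one (p := p)))]
  nlinarith [mul_le_mul_of_nonneg_left h1 hd2.le]

lemma hF_i0_pos : 0 < p.hF p.i0 := by
  have hi0 := i0_pos hp
  have hi1 := i0_lt_one hp
  have ha := aS_pos hp hi0 hi1
  have hk := kS_pos hp hi0 hi1
  have hk1 := kS_i0_ge hp
  have hs2 := SF_i0_ge hp
  have hbal := balance hp hi0 hi1
  have h1k1 := one_add_k1_pos hp
  have hW1β := W1_lt_β hp
  have hMM := MM_pos hp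
  have hW10 := W1_nonneg hp
  set s := p.SF p.i0
  set a := p.aS p.i0
  set k := p.kS p.i0
  have step1 : (p.βa + p.βu * p.k1) * (a * (1 + k)) ≤ (p.βa + p.βu * k) * a * (1 + p.k1) := by
    nlinarith [mul_nonneg (mul_nonneg ha.le (sub_nonneg.2 hp.hβaβu.le)) (sub_nonneg.2 hk1)]
  have step2 : p.W1 * (1 - p.i0 - s) ≤ p.βa * a + p.βu * (k * a) := by
    rw [← hbal, W1, div_mul_eq_mul_div, div_le_iff₀ h1k1]
    nlinarith
  have hc7 : p.i0 * (2 * (p.W1 + 1)) ≤ p.MM := by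
    have h := i0_le_c7 (p := p)
    rwa [le_div_iff₀ (by nlinarith)] at h
  have hMMdef : p.MM = (p.β - p.W1) * p.s2 - (p.δ - p.W1) := rfl
  have hsW : (p.β - p.W1) * p.s2 ≤ (p.β - p.W1) * s :=
    mul_le_mul_of_nonneg_left hs2 (by linarith)
  rw [hF]
  nlinarith

lemma main_ex :
    ∃ a u i : ℝ, 0 < a ∧ 0 < u ∧ 0 < i ∧ a + u + i < 1 ∧
      (p.αi * (1 - a - u - i) * i + p.αa * (1 - a - u - i) * a - p.βa * a * i
        - p.δa * (1 / (1 + (i / p.η) ^ p.m)) * a = 0) ∧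
      (p.δa * (1 / (1 + (i / p.η) ^ p.m)) * a
        + p.νa * (1 / (1 + (i / p.η) ^ p.m)) * (1 - a - u - i) * a
        - p.βu * u * i - p.δu * u = 0) ∧
      ((p.β * (1 - a - u - i) + p.βa * a + p.βu * u - p.δ) * i = 0) := by
  have hle : p.i0 ≤ p.i1 := (i0_lt_i1 hp).le
  have hcont : ContinuousOn p.hF (Set.Icc p.i0 p.i1) := fun j hj =>
    (hF_contAt hp (lt_of_lt_of_le (i0_pos hp) hj.1)
      (lt_of_le_of_lt hj.2 (i1_lt_one hp))).continuousWithinAt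
  have hmem : (0:ℝ) ∈ Set.Icc (p.hF p.i1) (p.hF p.i0) :=
    ⟨(hF_i1_neg hp).le, (hF_i0_pos hp).le⟩
  obtain ⟨i, hiIcc, hroot⟩ := intermediate_value_Icc' hle hcont hmem
  have hi0 : 0 < i := lt_of_lt_of_le (i0_pos hp) hiIcc.1
  have hi1' : i < 1 := lt_of_le_of_lt hiIcc.2 (i1_lt_one hp)
  have ha := aS_pos hp hi0 hi1'
  have hk := kS_pos hp hi0 hi1'
  have hs0 := SF_pos hp hi0 hi1'
  have hbal := balance hp hi0 hi1'
  have hs : 1 - p.aS i - p.kS i * p.aS i - i = p.SF i := by linear_combination - hbal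
  have hσdef : (1 : ℝ) / (1 + (i / p.η) ^ p.m) = p.sig i := rfl
  have hDne : p.Dd (p.SF i) i ≠ 0 := (Dd_pos hp hi0 (SF_lt_sHi hp hi0 hi1').le).ne'
  have haD : p.aS i * p.Dd (p.SF i) i = p.αi * p.SF i * i := by
    rw [aS, aF]
    exact div_mul_cancel₀ _ hDne
  simp only [Dd] at haD
  have hkden : p.βu * i + p.δu ≠ 0 := by nlinarith [hβu0 hp, hp.hδu]
  have hkk : p.kS i * (p.βu * i + p.δu) = p.sig i * (p.δa + p.νa * p.SF i) := by
    rw [kS, kF]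
    exact div_mul_cancel₀ _ hkden
  have hroot' : p.β * p.SF i + p.βa * p.aS i + p.βu * (p.kS i * p.aS i) - p.δ = 0 := hroot
  refine ⟨p.aS i, p.kS i * p.aS i, i, ha, mul_pos hk ha, hi0, by nlinarith, ?_, ?_, ?_⟩
  · rw [hs, hσdef]
    linear_combination (-1 : ℝ) * haD
  · rw [hs, hσdef]
    linear_combination (- p.aS i) * hkk
  · rw [hs]
    linear_combination i * hroot'

end Basic

variable (p)

lemma main (hp : p.Good) :
    ∃ a u i : ℝ, 0 < a ∧ 0 < u ∧ 0 < i ∧ a + u + i < 1 ∧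
      (p.αi * (1 - a - u - i) * i + p.αa * (1 - a - u - i) * a - p.βa * a * i
        - p.δa * (1 / (1 + (i / p.η) ^ p.m)) * a = 0) ∧
      (p.δa * (1 / (1 + (i / p.η) ^ p.m)) * a
        + p.νa * (1 / (1 + (i / p.η) ^ p.m)) * (1 - a - u - i) * a
        - p.βu * u * i - p.δu * u = 0) ∧
      ((p.β * (1 - a - u - i) + p.βa * a + p.βu * u - p.δ) * i = 0) :=
  main_ex hp

end SPar

/-- Existence of an endemic equilibrium of the SAUIS system with ε = 0,
under 0 ≤ β_a < β_u < δ < β, positivity of the other parameters, m ≥ 1, η > 0,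
and α_a/δ_a < (β−β_a)/(δ−β_a). -/
theorem sauis_endemic_equilibrium_exists
    (β βa βu αi αa νa δ δa δu η m : ℝ)
    (hβa0 : 0 ≤ βa) (hβaβu : βa < βu) (hβuδ : βu < δ) (hδβ : δ < β)
    (hαi : 0 < αi) (hαa : 0 < αa) (hνa : 0 < νa) (hδa : 0 < δa)
    (hδu : 0 < δu) (hη : 0 < η) (hm : 1 ≤ m)
    (hratio : αa / δa < (β - βa) / (δ - βa)) :
    ∃ a u i : ℝ, 0 < a ∧ 0 < u ∧ 0 < i ∧ a + u + i < 1 ∧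
      (αi * (1 - a - u - i) * i + αa * (1 - a - u - i) * a - βa * a * i
        - δa * (1 / (1 + (i / η) ^ m)) * a = 0) ∧
      (δa * (1 / (1 + (i / η) ^ m)) * a + νa * (1 / (1 + (i / η) ^ m)) * (1 - a - u - i) * a
        - βu * u * i - δu * u = 0) ∧
      ((β * (1 - a - u - i) + βa * a + βu * u - δ) * i = 0) := by
  exact SPar.main ⟨β, βa, βu, αi, αa, νa, δ, δa, δu, η, m⟩
    ⟨hβa0, hβaβu, hβuδ, hδβ, hαi, hαa, hνa, hδa, hδu, hη, hm, hratio⟩
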